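/- Let A ⊆ K be an integrally closed domain in a field K, containing μ_n(K) and the reciprocal of the Vandermonde determinant of some ordering of μ_n(K), with char K ∤ n. Let f ∈ K×. Then the integral closure of A in the ring K[T]/(T^n − f) equals ⊕_{i=0}^{n−1} {x ∈ K : x^n·f^i ∈ A}·t^i, where t is the class of T. -/

import Mathlib

open Polynomial



private lemma my_sum_int {R S : Type*} [CommRing R] [CommRing S] (φ : R →+* S) {ι : Type*}
    (s : Finset ι) (v : ι → S) (h : ∀ i ∈ s, φ.IsIntegralElem (v i)) :
    φ.IsIntegralElem (∑ i ∈ s, v i) := by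
  classical
  induction s using Finset.induction with
  | empty => simpa using φ.isIntegralElem_zero
  | insert _ _ hx ih =>
    rw [Finset.sum_insert hx]
    exact (h _ (Finset.mem_insert_self _ _)).add _
      (ih fun i hi => h i (Finset.mem_insert_of_mem hi))

private lemma my_pow_int {R S : Type*} [CommRing R] [CommRing S] (φ : R →+* S) {x : S}
    (h : φ.IsIntegralElem x) (m : ℕ) (hm : 0 < m) : φ.IsIntegralElem (x ^ m) := by
  induction m with
  | zero => simpa using φ.isIntegralElem_one
  | succ k ih =>
    rcases Nat.eq_zero_or_pos k with hk | hk
    · subst hk; simpa using h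
    · rw [pow_succ]; exact (ih hk).mul _ h

private lemma my_prod_pairs {β : Type*} [CommMonoid β] (n : ℕ) (g : Fin n → Fin n → β) :
    ∏ p ∈ Finset.univ.filter (fun p : Fin n × Fin n => p.1 < p.2), g p.1 p.2 =
      ∏ i : Fin n, ∏ j ∈ Finset.Ioi i, g i j := by
  rw [Finset.prod_filter, ← Finset.univ_product_univ,
    Finset.prod_product' (f := fun i j => if i < j then g i j else 1)]
  refine Finset.prod_congr rfl fun i _ => ?_
  rw [← Finset.filter_lt_eq_Ioi, Finset.prod_filter]



/-- Let `A ⊆ K` be a subring, integrally closed in `K`, containing the `n` distinct `n`-th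
roots of unity of `K` and the reciprocal of the Vandermonde determinant of an ordering of
`μ_n(K)`, with `char K ∤ n`. Let `f ∈ Kˣ` and `t` the class of `T` in `K[T]/(Tⁿ - f)`. Then
the integral closure of `A` in `K[T]/(Tⁿ - f)` equals `⊕_{i=0}^{n-1} {x ∈ K : xⁿfⁱ ∈ A}·tⁱ`. -/
theorem stmt_9 (K : Type*) [Field K] (A : Subring K) (n : ℕ) (hn : 0 < n)
    (hchar : ¬ (ringChar K ∣ n))
    (hA : ∀ x : K, (A.subtype).IsIntegralElem x → x ∈ A)
    (hμA : ∀ ζ : K, ζ ^ n = 1 → ζ ∈ A)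
    (hvdm : ∃ e : Fin n → K, Function.Injective e ∧ (∀ i, (e i) ^ n = 1) ∧
      ∃ w ∈ A, w * ∏ p ∈ Finset.univ.filter (fun p : Fin n × Fin n => p.1 < p.2),
        (e p.2 - e p.1) = 1)
    (f : K) (hf : f ≠ 0) :
    ∀ α : AdjoinRoot (X ^ n - C f),
      ((algebraMap K (AdjoinRoot (X ^ n - C f))).comp A.subtype).IsIntegralElem α ↔
      ∃ c : Fin n → K, (∀ i : Fin n, c i ^ n * f ^ (i : ℕ) ∈ A) ∧
        α = ∑ i : Fin n,
          algebraMap K (AdjoinRoot (X ^ n - C f)) (c i) * AdjoinRoot.root _ ^ (i : ℕ) := by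
  classical
  set g : K[X] := X ^ n - C f with hgdef
  set R := AdjoinRoot g with hRdef
  set φ : A →+* R := (algebraMap K R).comp A.subtype with hφdef
  have hmon : g.Monic := monic_X_pow_sub_C f hn.ne'
  have hdegg : g.natDegree = n := natDegree_X_pow_sub_C
  have hroot : (AdjoinRoot.root g) ^ n = algebraMap K R f := by
    have := root_X_pow_sub_C_pow n f
    rw [← AdjoinRoot.algebraMap_eq] at this
    exact this
  have hnt : Nontrivial R := AdjoinRoot.nontrivial g (by
    rw [degree_eq_natDegree hmon.ne_zero, hdegg]
    exact_mod_cast hn.ne')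
  have hinj : Function.Injective (algebraMap K R) := RingHom.injective _
  intro α
  constructor
  · intro hα
    obtain ⟨p0, rfl⟩ := AdjoinRoot.mk_surjective α
    set q := p0 %ₘ g with hqdef
    have hqd : q.natDegree < n := by
      rcases eq_or_ne q 0 with h0 | h0
      · simpa [h0] using hn
      · have hd := degree_modByMonic_lt p0 hmon
        rw [degree_eq_natDegree hmon.ne_zero, hdegg] at hd
        exact_mod_cast (degree_eq_natDegree h0 ▸ hd : (q.natDegree : WithBot ℕ) < (n : ℕ))
    have hrep : AdjoinRoot.mk g p0 =
        ∑ i : Fin n, algebraMap K R (q.coeff i) * AdjoinRoot.root g ^ (i : ℕ) := by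
      have h1 : AdjoinRoot.mk g p0 = AdjoinRoot.mk g q := by
        rw [AdjoinRoot.mk_eq_mk]
        exact ⟨p0 /ₘ g, by have := modByMonic_add_div p0 g; ring_nf; linear_combination -this⟩
      rw [h1, ← AdjoinRoot.aeval_eq, aeval_eq_sum_range' hqd, Finset.sum_range fun i => q.coeff i • AdjoinRoot.root g ^ i]
      exact Finset.sum_congr rfl fun i _ => by rw [Algebra.smul_def]
    obtain ⟨e, hei, hμ, w, hwA, hwprod⟩ := hvdm
    have hσ0 : ∀ i : Fin n,
        g.eval₂ (algebraMap K R) (algebraMap K R (e i) * AdjoinRoot.root g) = 0 := by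
      intro i
      show Polynomial.eval₂ (algebraMap K R) (algebraMap K R (e i) * AdjoinRoot.root g) (X ^ n - C f) = 0
      rw [eval₂_sub, eval₂_pow, eval₂_X, eval₂_C, mul_pow, ← map_pow, hμ i, map_one, one_mul,
        hroot, sub_self]
    let σ : Fin n → (R →+* R) := fun i =>
      AdjoinRoot.lift (algebraMap K R) (algebraMap K R (e i) * AdjoinRoot.root g) (hσ0 i)
    have hσalg : ∀ (i : Fin n) (x : K), σ i (algebraMap K R x) = algebraMap K R x := by
      intro i x
      exact AdjoinRoot.lift_of (hσ0 i)
    have hσroot : ∀ i : Fin n,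
        σ i (AdjoinRoot.root g) = algebraMap K R (e i) * AdjoinRoot.root g := fun i =>
      AdjoinRoot.lift_root (hσ0 i)
    have hint : ∀ i : Fin n, φ.IsIntegralElem (σ i (AdjoinRoot.mk g p0)) := by
      intro i
      obtain ⟨P, Pm, hP⟩ := hα
      refine ⟨P, Pm, ?_⟩
      have hcomp : (σ i).comp φ = φ := RingHom.ext fun a => hσalg i a
      calc P.eval₂ φ (σ i (AdjoinRoot.mk g p0))
        = P.eval₂ ((σ i).comp φ) (σ i (AdjoinRoot.mk g p0)) := by rw [hcomp]
        _ = σ i (P.eval₂ φ (AdjoinRoot.mk g p0)) := (hom_eval₂ _ _ _ _).symm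
        _ = 0 := by rw [hP, map_zero]
    have hu : ∀ i : Fin n, σ i (AdjoinRoot.mk g p0) =
        ∑ j : Fin n, algebraMap K R (e i ^ (j : ℕ) * q.coeff j) * AdjoinRoot.root g ^ (j : ℕ) := by
      intro i
      rw [hrep, map_sum]
      refine Finset.sum_congr rfl fun j _ => ?_
      rw [map_mul, hσalg, map_pow, hσroot, mul_pow, ← map_pow, map_mul]
      ring
    let eA : Fin n → A := fun i => ⟨e i, hμA _ (hμ i)⟩
    let M : Matrix (Fin n) (Fin n) A := Matrix.vandermonde eA
    have hdet : (⟨w, hwA⟩ : A) * M.det = 1 := by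
      apply Subtype.coe_injective
      push_cast
      have hMdet : (M.det : K) = ∏ i : Fin n, ∏ j ∈ Finset.Ioi i, (e j - e i) := by
        have : (A.subtype M.det) = (M.map A.subtype).det := RingHom.map_det A.subtype M
        rw [show ((M.det : K)) = A.subtype M.det from rfl, this]
        have hmap : M.map A.subtype = Matrix.vandermonde e := by
          ext i j
          simp [M, Matrix.vandermonde, eA]
        rw [hmap, Matrix.det_vandermonde]
      rw [hMdet, ← my_prod_pairs n (fun i j => e j - e i)]
      exact hwprod
    have hdetinv : Invertible M.det :=
      ⟨(⟨w, hwA⟩ : A), hdet, by rwa [mul_comm] at hdet⟩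
    have hMinv : Invertible M := M.invertibleOfDetInvertible
    set N : Matrix (Fin n) (Fin n) A := ⅟M with hNdef
    let v : Fin n → R := fun j => algebraMap K R (q.coeff j) * AdjoinRoot.root g ^ (j : ℕ)
    have hNM : (N.map φ) * (M.map φ) = 1 := by
      rw [← Matrix.map_mul, invOf_mul_self, Matrix.map_one φ (map_zero φ) (map_one φ)]
    have hMv : (M.map φ).mulVec v = fun i => σ i (AdjoinRoot.mk g p0) := by
      funext i
      rw [hu i]
      simp only [Matrix.mulVec, dotProduct, Matrix.map_apply]
      refine Finset.sum_congr rfl fun j _ => ?_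
      have : φ (M i j) = algebraMap K R (e i ^ (j : ℕ)) := by
        simp [M, Matrix.vandermonde, eA, φ, map_pow]
      rw [this]
      show _ = (algebraMap K R) (e i ^ (j:ℕ) * q.coeff j) * AdjoinRoot.root g ^ (j:ℕ)
      rw [map_mul]
      ring
    have hv : ∀ j, v j = ∑ i : Fin n, φ (N j i) * σ i (AdjoinRoot.mk g p0) := by
      have key : (N.map φ).mulVec ((M.map φ).mulVec v) = v := by
        rw [Matrix.mulVec_mulVec, hNM, Matrix.one_mulVec]
      intro j
      conv_lhs => rw [← key]
      rw [hMv]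
      simp [Matrix.mulVec, dotProduct, Matrix.map_apply]
    have hvint : ∀ j, φ.IsIntegralElem (v j) := by
      intro j
      rw [hv j]
      exact my_sum_int φ _ _ fun i _ => RingHom.IsIntegralElem.mul φ φ.isIntegralElem_map (hint i)
    refine ⟨fun i => q.coeff i, fun j => ?_, hrep⟩
    have hvpow : (v j) ^ n = algebraMap K R (q.coeff j ^ n * f ^ (j : ℕ)) := by
      show (algebraMap K R (q.coeff j) * AdjoinRoot.root g ^ (j : ℕ)) ^ n = _
      rw [mul_pow, ← pow_mul, mul_comm (j : ℕ) n, pow_mul, hroot, ← map_pow, ← map_pow, ← map_mul]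
    obtain ⟨P, Pm, hP⟩ := my_pow_int φ (hvint j) n hn
    rw [hvpow] at hP
    apply hA
    refine ⟨P, Pm, hinj ?_⟩
    rw [map_zero, hom_eval₂]
    exact hP
  · rintro ⟨c, hc, rfl⟩
    apply my_sum_int
    intro i _
    refine ⟨X ^ n - C (⟨c i ^ n * f ^ (i : ℕ), hc i⟩ : A), monic_X_pow_sub_C _ hn.ne', ?_⟩
    rw [eval₂_sub, eval₂_pow, eval₂_X, eval₂_C]
    have hφv : φ (⟨c i ^ n * f ^ (i : ℕ), hc i⟩ : A) = algebraMap K R (c i ^ n * f ^ (i : ℕ)) :=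
      rfl
    rw [hφv, mul_pow, ← pow_mul, mul_comm (i : ℕ) n, pow_mul, hroot, ← map_pow, ← map_pow,
      ← map_mul, sub_self]
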